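/- Let E ⊆ X × Y × Z be measurable in a graded probability space. If E is partition-wise d-μ-stable (for each way of separating one coordinate from the other two, the resulting binary relation is d-μ-stable), then E is slice-wise d-μ-stable: for almost every x ∈ X the slice E_x ⊆ Y × Z is d-μ-stable, and similarly for slices E_y and E_z. -/

import Mathlib

open Set MeasureTheory
open scoped ENNReal

/-- The index set `2^{<d}` of 0-1 sequences of length `< d`. -/
abbrev TreeIdx (d : ℕ) := (i : Fin d) × (Fin i.val → Bool)

/-- The set of trees of height `d` for `E ⊆ U × V`. -/
def TreeSet {U V : Type*} (E : Set (U × V)) (d : ℕ) :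
    Set (((Fin d → Bool) → U) × (TreeIdx d → V)) :=
  {p | ∀ (σ : Fin d → Bool) (i : Fin d),
    (p.1 σ, p.2 ⟨i, fun j => σ ⟨j.1, j.2.trans i.2⟩⟩) ∈ E ↔ σ i = true}

/-- `E` is `d`-μ-stable: the set of trees of height `d` for `E` has measure zero. -/
def TreeZero {U V : Type*} [MeasurableSpace U] [MeasurableSpace V]
    (μU : Measure U) (μV : Measure V) (E : Set (U × V)) (d : ℕ) : Prop :=
  ((Measure.pi fun _ : Fin d → Bool => μU).prod
    (Measure.pi fun _ : TreeIdx d => μV)) (TreeSet E d) = 0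

/-- Sets defined by countably many "membership iff boolean" conditions are measurable. -/
lemma measurableSet_forall_mem_iff {α U' V' : Type*} [MeasurableSpace α]
    [MeasurableSpace U'] [MeasurableSpace V'] {ι κ : Type*} [Countable ι] [Countable κ]
    {R : Set (U' × V')} (hR : MeasurableSet R) (f : ι → κ → α → U' × V')
    (hf : ∀ p q, Measurable (f p q)) (b : ι → κ → Bool) :
    MeasurableSet {a | ∀ p q, f p q a ∈ R ↔ b p q = true} := by
  have h : {a | ∀ p q, f p q a ∈ R ↔ b p q = true}
      = ⋂ p, ⋂ q, {a | f p q a ∈ R ↔ b p q = true} := by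
    ext a; simp
  rw [h]
  refine MeasurableSet.iInter fun p => MeasurableSet.iInter fun q => ?_
  rcases Bool.eq_false_or_eq_true (b p q) with hb | hb
  · have : {a | f p q a ∈ R ↔ b p q = true} = (f p q) ⁻¹' R := by
      ext a; simp [hb]
    rw [this]; exact hR.preimage (hf p q)
  · have : {a | f p q a ∈ R ↔ b p q = true} = ((f p q) ⁻¹' R)ᶜ := by
      ext a; simp [hb]
    rw [this]; exact (hR.preimage (hf p q)).compl

lemma measurableSet_treeSet {U V : Type*} [MeasurableSpace U] [MeasurableSpace V]
    {E : Set (U × V)} (hE : MeasurableSet E) (d : ℕ) : MeasurableSet (TreeSet E d) := by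
  have := measurableSet_forall_mem_iff (α := ((Fin d → Bool) → U) × (TreeIdx d → V)) hE
    (fun σ i p => (p.1 σ, p.2 ⟨i, fun j => σ ⟨j.1, j.2.trans i.2⟩⟩))
    (fun σ i => ((measurable_pi_apply σ).comp measurable_fst).prodMk
      ((measurable_pi_apply _).comp measurable_snd))
    (fun σ i => σ i)
  exact this

/-- Applying a measure-preserving map coordinatewise is measure preserving on pi measures. -/
lemma measurePreserving_piMap {ι : Type*} [Fintype ι] {α β : Type*}
    [MeasurableSpace α] [MeasurableSpace β] {f : α → β} {μ : Measure α} {ν : Measure β}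
    [SigmaFinite μ] [SigmaFinite ν] (hf : MeasurePreserving f μ ν) :
    MeasurePreserving (fun (g : ι → α) (i : ι) => f (g i))
      (Measure.pi fun _ : ι => μ) (Measure.pi fun _ : ι => ν) := by
  have hm : Measurable (fun (g : ι → α) (i : ι) => f (g i)) :=
    measurable_pi_lambda _ fun i => hf.measurable.comp (measurable_pi_apply i)
  refine ⟨hm, ?_⟩
  refine (Measure.pi_eq fun s hs => ?_).symm
  rw [Measure.map_apply hm (MeasurableSet.univ_pi hs)]
  have hpre : (fun (g : ι → α) (i : ι) => f (g i)) ⁻¹' (univ.pi s) = univ.pi fun i => f ⁻¹' s i := by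
    ext g; simp [Set.mem_pi]
  rw [hpre, Measure.pi_pi]
  exact Finset.prod_congr rfl fun i _ => hf.measure_preimage (hs i).nullMeasurableSet

/-- Key lemma: if the relation `R ⊆ U × W`, where `W` carries a measure-preserving
identification with `C × V`, is `d`-μ-stable, then for a.e. `c` the slice relation on
`U × V` is `d`-μ-stable. -/
lemma key_slice {U C V W : Type*} [MeasurableSpace U] [MeasurableSpace C]
    [MeasurableSpace V] [MeasurableSpace W]
    (μU : Measure U) (μC : Measure C) (μV : Measure V) (μW : Measure W)
    [IsProbabilityMeasure μU] [IsProbabilityMeasure μC] [IsProbabilityMeasure μV]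
    [IsProbabilityMeasure μW]
    (e : C × V ≃ᵐ W) (he : MeasurePreserving (⇑e) (μC.prod μV) μW)
    {R : Set (U × W)} (hR : MeasurableSet R) (d : ℕ)
    (h : TreeZero μU μW R d) :
    ∀ᵐ c ∂μC, TreeZero μU μV {p : U × V | (p.1, e (c, p.2)) ∈ R} d := by
  classical
  rcases Nat.eq_zero_or_pos d with rfl | hd
  · -- `d = 0`: the hypothesis is contradictory
    exfalso
    have huniv : TreeSet R 0 = univ := by
      ext p; simp only [TreeSet, mem_setOf_eq, mem_univ, iff_true]
      intro σ i; exact i.elim0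
    rw [TreeZero, huniv, measure_univ] at h
    exact one_ne_zero h
  -- notation
  set L := (Fin d → Bool) with hL
  set T := TreeIdx d with hT
  have hTne : Nonempty T := ⟨⟨⟨0, hd⟩, Fin.elim0⟩⟩
  set ν : Measure (L → U) := Measure.pi fun _ : L => μU with hν
  set πV : Measure (T → V) := Measure.pi fun _ : T => μV with hπV
  set πC : Measure (T → C) := Measure.pi fun _ : T => μC with hπC
  set PP : Measure ((L → U) × (T → V)) := ν.prod πV with hPP
  set Ec : C → Set (U × V) := fun c => {p | (p.1, e (c, p.2)) ∈ R} with hEc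
  set S : Set (C × ((L → U) × (T → V))) := {cq | cq.2 ∈ TreeSet (Ec cq.1) d} with hS
  have hSm : MeasurableSet S := by
    have := measurableSet_forall_mem_iff (α := C × ((L → U) × (T → V))) hR
      (fun (σ : L) (i : Fin d) cq =>
        (cq.2.1 σ, e (cq.1, cq.2.2 ⟨i, fun j => σ ⟨j.1, j.2.trans i.2⟩⟩)))
      (fun σ i => (((measurable_pi_apply σ).comp measurable_fst).comp measurable_snd).prodMk
        (e.measurable.comp (measurable_fst.prodMk
          (((measurable_pi_apply _).comp measurable_snd).comp measurable_snd))))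
      (fun σ i => σ i)
    exact this
  -- the big product set
  set B : Set (((L → U) × (T → V)) × (T → C)) := {qc | ∀ τ : T, (qc.2 τ, qc.1) ∈ S} with hB
  have hBm : MeasurableSet B := by
    have : B = ⋂ τ : T, (fun qc : ((L → U) × (T → V)) × (T → C) => (qc.2 τ, qc.1)) ⁻¹' S := by
      ext qc; simp [hB]
    rw [this]
    exact MeasurableSet.iInter fun τ =>
      hSm.preimage (((measurable_pi_apply τ).comp measurable_snd).prodMk measurable_fst)
  -- the rearranging map
  set Φ : (((L → U) × (T → V)) × (T → C)) → ((L → U) × (T → W)) :=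
    fun qc => (qc.1.1, fun τ => e (qc.2 τ, qc.1.2 τ)) with hΦ
  have hΦmp : MeasurePreserving Φ (PP.prod πC)
      (ν.prod (Measure.pi fun _ : T => μW)) := by
    have m1 : MeasurePreserving (MeasurableEquiv.prodAssoc :
        ((L → U) × (T → V)) × (T → C) ≃ᵐ (L → U) × ((T → V) × (T → C)))
        (PP.prod πC) (ν.prod (πV.prod πC)) := measurePreserving_prodAssoc ν πV πC
    have m2 : MeasurePreserving (Prod.map (id : (L → U) → (L → U)) Prod.swap)
        (ν.prod (πV.prod πC)) (ν.prod (πC.prod πV)) :=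
      (MeasurePreserving.id ν).prod Measure.measurePreserving_swap
    have m3 : MeasurePreserving
        (Prod.map (id : (L → U) → (L → U))
          (MeasurableEquiv.arrowProdEquivProdArrow C V T).symm)
        (ν.prod (πC.prod πV)) (ν.prod (Measure.pi fun _ : T => μC.prod μV)) :=
      (MeasurePreserving.id ν).prod
        ((measurePreserving_arrowProdEquivProdArrow C V T (fun _ => μC) (fun _ => μV)).symm _)
    have m4 : MeasurePreserving
        (Prod.map (id : (L → U) → (L → U)) (fun g (τ : T) => e (g τ)))
        (ν.prod (Measure.pi fun _ : T => μC.prod μV)) (ν.prod (Measure.pi fun _ : T => μW)) :=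
      (MeasurePreserving.id ν).prod (measurePreserving_piMap he)
    have hcomp := ((m4.comp m3).comp m2).comp m1
    convert hcomp using 1
    funext qc; rfl
  -- `B` maps into the tree set of `R`, hence is null
  have hBsub : B ⊆ Φ ⁻¹' TreeSet R d := by
    rintro ⟨⟨u, v⟩, c⟩ hqc
    intro σ i
    exact hqc ⟨i, fun j => σ ⟨j.1, j.2.trans i.2⟩⟩ σ i
  have hBzero : (PP.prod πC) B = 0 := by
    refine le_antisymm ?_ (zero_le)
    calc (PP.prod πC) B ≤ (PP.prod πC) (Φ ⁻¹' TreeSet R d) := measure_mono hBsub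
    _ = (ν.prod (Measure.pi fun _ : T => μW)) (TreeSet R d) :=
        hΦmp.measure_preimage (measurableSet_treeSet hR d).nullMeasurableSet
    _ = 0 := h
  -- Fubini on `B`
  have hBint : ∫⁻ q, πC ((Prod.mk q) ⁻¹' B) ∂PP = 0 := by
    rw [← Measure.prod_apply hBm]; exact hBzero
  have hslice : ∀ q, (Prod.mk q) ⁻¹' B = univ.pi (fun _ : T => {c | (c, q) ∈ S}) := by
    intro q; ext c; simp [hB, Set.mem_pi]
  have hAm : ∀ q : (L → U) × (T → V), MeasurableSet {c | (c, q) ∈ S} :=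
    fun q => hSm.preimage (measurable_id.prodMk measurable_const)
  have hmeas : Measurable fun q => πC ((Prod.mk q) ⁻¹' B) :=
    measurable_measure_prodMk_left hBm
  have hae : ∀ᵐ q ∂PP, πC ((Prod.mk q) ⁻¹' B) = 0 := by
    have := (lintegral_eq_zero_iff hmeas).mp hBint
    filter_upwards [this] with q hq using hq
  have haeA : ∀ᵐ q ∂PP, μC {c | (c, q) ∈ S} = 0 := by
    filter_upwards [hae] with q hq
    rw [hslice q, Measure.pi_pi] at hq
    rw [Finset.prod_const] at hq
    have hk : (Finset.univ : Finset T).card ≠ 0 := by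
      simp [Finset.card_univ, Fintype.card_ne_zero]
    exact pow_eq_zero_iff hk |>.mp hq
  -- Fubini on `S`
  have hSzero : (μC.prod PP) S = 0 := by
    rw [Measure.prod_apply_symm hSm]
    have : ∫⁻ q, μC ((fun c => (c, q)) ⁻¹' S) ∂PP = ∫⁻ q, 0 ∂PP := by
      refine lintegral_congr_ae ?_
      filter_upwards [haeA] with q hq using hq
    rw [this, lintegral_zero]
  have hfinal := Measure.measure_ae_null_of_prod_null hSzero
  filter_upwards [hfinal] with c hc
  exact hc

/-- Partition-wise `d`-μ-stability of a ternary relation implies slice-wise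
`d`-μ-stability. -/
theorem partitionWise_muStable_implies_sliceWise
    {X Y Z : Type*} [MeasurableSpace X] [MeasurableSpace Y] [MeasurableSpace Z]
    (μX : Measure X) (μY : Measure Y) (μZ : Measure Z)
    [IsProbabilityMeasure μX] [IsProbabilityMeasure μY] [IsProbabilityMeasure μZ]
    (E : Set (X × Y × Z)) (hE : MeasurableSet E) (d : ℕ)
    (hX : TreeZero μX (μY.prod μZ) E d)
    (hY : TreeZero μY (μX.prod μZ) {p : Y × X × Z | (p.2.1, p.1, p.2.2) ∈ E} d)
    (hZ : TreeZero μZ (μX.prod μY) {p : Z × X × Y | (p.2.1, p.2.2, p.1) ∈ E} d) :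
    (∀ᵐ x ∂μX, TreeZero μY μZ {p : Y × Z | (x, p.1, p.2) ∈ E} d) ∧
      (∀ᵐ y ∂μY, TreeZero μX μZ {p : X × Z | (p.1, y, p.2) ∈ E} d) ∧
      (∀ᵐ z ∂μZ, TreeZero μX μY {p : X × Y | (p.1, p.2, z) ∈ E} d) := by
  have hRY : MeasurableSet {p : Y × X × Z | (p.2.1, p.1, p.2.2) ∈ E} := by
    exact hE.preimage ((measurable_fst.comp measurable_snd).prodMk
      (measurable_fst.prodMk (measurable_snd.comp measurable_snd)))
  refine ⟨?_, ?_, ?_⟩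
  · have := key_slice μY μX μZ (μX.prod μZ) (MeasurableEquiv.refl (X × Z))
      (MeasurePreserving.id _) hRY d hY
    filter_upwards [this] with x hx
    exact hx
  · have := key_slice μX μY μZ (μY.prod μZ) (MeasurableEquiv.refl (Y × Z))
      (MeasurePreserving.id _) hE d hX
    filter_upwards [this] with y hy
    exact hy
  · have := key_slice μX μZ μY (μY.prod μZ) (MeasurableEquiv.prodComm : Z × Y ≃ᵐ Y × Z)
      Measure.measurePreserving_swap hE d hX
    filter_upwards [this] with z hz
    exact hz
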